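/- For the horizontal sum of k classical models with all frequencies positive, the maximum value of the likelihood equals Σ_i Σ_{x∈A_i} n(x)·ln(n(x)/n(A_i)), and in particular the maximal likelihood is strictly positive (the maximal value of the product form Π p(x)^{n(x)} is positive). -/

import Mathlib

open Finset

theorem stmt18 {α : Type*} [Fintype α] [DecidableEq α] (k : ℕ)
    (A : Fin k → Finset α)
    (hdisj : ∀ i j, i ≠ j → Disjoint (A i) (A j))
    (hne : ∀ i, (A i).Nonempty)
    (hcover : Finset.univ.biUnion A = Finset.univ)
    (n : α → ℕ) (hn : ∀ x, 1 ≤ n x) :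
    let Feas : (α → ℝ) → Prop := fun p =>
      (∀ x, 0 < p x ∧ p x ≤ 1) ∧ ∀ i, ∑ x ∈ A i, p x = 1
    let nA : Fin k → ℝ := fun i => ∑ y ∈ A i, (n y : ℝ)
    let M : ℝ := ∑ i, ∑ x ∈ A i, (n x : ℝ) * Real.log ((n x : ℝ) / nA i)
    let P : ℝ := ∏ i, ∏ x ∈ A i, ((n x : ℝ) / nA i) ^ (n x)
    IsGreatest {y | ∃ p, Feas p ∧ y = ∑ x, (n x : ℝ) * Real.log (p x)} M ∧
    IsGreatest {y | ∃ p, Feas p ∧ y = ∏ x, p x ^ (n x)} P ∧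
    0 < P := by
  intro Feas nA M P
  classical
  have hnA : ∀ i, nA i = ∑ y ∈ A i, (n y : ℝ) := fun i => rfl
  have hex : ∀ x : α, ∃ i, x ∈ A i := by
    intro x
    have hx : x ∈ Finset.univ.biUnion A := by rw [hcover]; exact mem_univ x
    simpa using Finset.mem_biUnion.mp hx
  choose idx hidx using hex
  have hApos : ∀ i, (0:ℝ) < nA i := by
    intro i
    obtain ⟨x, hx⟩ := hne i
    have h1 : (1:ℝ) ≤ (n x : ℝ) := by exact_mod_cast hn x
    have h2 : (n x : ℝ) ≤ ∑ y ∈ A i, (n y : ℝ) :=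
      Finset.single_le_sum (f := fun y => (n y : ℝ)) (fun y _ => Nat.cast_nonneg _) hx
    rw [hnA]; linarith
  have hidx_eq : ∀ i, ∀ x ∈ A i, idx x = i := by
    intro i x hx
    by_contra h
    exact (Finset.disjoint_left.mp (hdisj _ _ h) (hidx x)) hx
  have hpd : Set.PairwiseDisjoint (↑(Finset.univ : Finset (Fin k))) A := by
    intro i _ j _ hij; exact hdisj i j hij
  have hsum : ∀ f : α → ℝ, ∑ x, f x = ∑ i, ∑ x ∈ A i, f x := by
    intro f
    conv_lhs => rw [← hcover]
    exact Finset.sum_biUnion hpd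
  have hprod : ∀ f : α → ℝ, ∏ x, f x = ∏ i, ∏ x ∈ A i, f x := by
    intro f
    conv_lhs => rw [← hcover]
    exact Finset.prod_biUnion hpd
  set pstar : α → ℝ := fun x => (n x : ℝ) / nA (idx x) with hpstar
  have hps_eq : ∀ i, ∀ x ∈ A i, pstar x = (n x : ℝ) / nA i := by
    intro i x hx; simp [hpstar, hidx_eq i x hx]
  have hfeas : Feas pstar := by
    constructor
    · intro x
      have hnx : (0:ℝ) < n x := by exact_mod_cast hn x
      constructor
      · exact div_pos hnx (hApos _)
      · rw [div_le_one (hApos _), hnA]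
        exact Finset.single_le_sum (f := fun y => (n y : ℝ)) (fun y _ => Nat.cast_nonneg _) (hidx x)
    · intro i
      rw [Finset.sum_congr rfl (hps_eq i), ← Finset.sum_div, ← hnA,
        div_self (hApos i).ne']
  -- Gibbs inequality per edge
  have gibbs : ∀ p, Feas p → ∀ i,
      ∑ x ∈ A i, (n x : ℝ) * Real.log (p x) ≤
      ∑ x ∈ A i, (n x : ℝ) * Real.log ((n x : ℝ) / nA i) := by
    intro p hp i
    have key : ∀ x ∈ A i,
        (n x : ℝ) * Real.log (p x) - (n x : ℝ) * Real.log ((n x : ℝ) / nA i)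
          ≤ nA i * p x - (n x : ℝ) := by
      intro x hx
      have hnx : (0:ℝ) < n x := by exact_mod_cast hn x
      have hpx := (hp.1 x).1
      have h1 : Real.log (p x) - Real.log ((n x : ℝ) / nA i)
          = Real.log (p x * nA i / (n x : ℝ)) := by
        rw [Real.log_div (mul_pos hpx (hApos i)).ne' hnx.ne',
          Real.log_div hnx.ne' (hApos i).ne', Real.log_mul hpx.ne' (hApos i).ne']
        ring
      have h2 : Real.log (p x * nA i / (n x : ℝ)) ≤ p x * nA i / (n x : ℝ) - 1 :=
        Real.log_le_sub_one_of_pos (div_pos (mul_pos hpx (hApos i)) hnx)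
      have h3 : (n x : ℝ) * (Real.log (p x) - Real.log ((n x : ℝ) / nA i))
          ≤ (n x : ℝ) * (p x * nA i / (n x : ℝ) - 1) := by
        rw [h1]; exact mul_le_mul_of_nonneg_left h2 hnx.le
      have h4 : (n x : ℝ) * (p x * nA i / (n x : ℝ) - 1) = nA i * p x - (n x : ℝ) := by
        field_simp
      nlinarith [h3]
    have hsumle : ∑ x ∈ A i, ((n x : ℝ) * Real.log (p x)
        - (n x : ℝ) * Real.log ((n x : ℝ) / nA i))
        ≤ ∑ x ∈ A i, (nA i * p x - (n x : ℝ)) := Finset.sum_le_sum key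
    have hzero : ∑ x ∈ A i, (nA i * p x - (n x : ℝ)) = 0 := by
      rw [Finset.sum_sub_distrib, ← Finset.mul_sum, hp.2 i, ← hnA]
      ring
    rw [Finset.sum_sub_distrib] at hsumle
    linarith [hsumle, hzero.le]
  -- upper bound for log-likelihood
  have hub : ∀ p, Feas p → ∑ x, (n x : ℝ) * Real.log (p x) ≤ M := by
    intro p hp
    rw [hsum]
    exact Finset.sum_le_sum fun i _ => gibbs p hp i
  -- value at pstar
  have hval : ∑ x, (n x : ℝ) * Real.log (pstar x) = M := by
    rw [hsum]
    refine Finset.sum_congr rfl fun i _ => Finset.sum_congr rfl fun x hx => ?_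
    rw [hps_eq i x hx]
  have hG1 : IsGreatest {y | ∃ p, Feas p ∧ y = ∑ x, (n x : ℝ) * Real.log (p x)} M := by
    constructor
    · exact ⟨pstar, hfeas, hval.symm⟩
    · rintro y ⟨p, hp, rfl⟩; exact hub p hp
  -- product part
  have hPval : ∏ x, pstar x ^ (n x) = P := by
    rw [hprod]
    refine Finset.prod_congr rfl fun i _ => Finset.prod_congr rfl fun x hx => ?_
    rw [hps_eq i x hx]
  have hPpos : 0 < P := by
    rw [← hPval]
    exact Finset.prod_pos fun x _ => pow_pos (hfeas.1 x).1 _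
  have hlogprod : ∀ p, Feas p →
      Real.log (∏ x, p x ^ (n x)) = ∑ x, (n x : ℝ) * Real.log (p x) := by
    intro p hp
    rw [Real.log_prod (fun x _ => (pow_pos (hp.1 x).1 _).ne')]
    exact Finset.sum_congr rfl fun x _ => by rw [Real.log_pow]
  have hG2 : IsGreatest {y | ∃ p, Feas p ∧ y = ∏ x, p x ^ (n x)} P := by
    constructor
    · exact ⟨pstar, hfeas, hPval.symm⟩
    · rintro y ⟨p, hp, rfl⟩
      have hy : 0 < ∏ x, p x ^ (n x) := Finset.prod_pos fun x _ => pow_pos ((hp.1 x).1) _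
      have hlogP : Real.log P = M := by
        rw [← hPval, hlogprod pstar hfeas, hval]
      have hlog : Real.log (∏ x, p x ^ (n x)) ≤ Real.log P := by
        rw [hlogprod p hp, hlogP]
        exact hub p hp
      exact (Real.log_le_log_iff hy hPpos).mp hlog
  exact ⟨hG1, hG2, hPpos⟩
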